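/- Let a = sl₂(k) ⊕ sl₂(k) and x = (e, 0) where e = E₁₂ ∈ sl₂(k) is a nonzero nilpotent element. Then a_x = (k·e) ⊕ sl₂(k), and the set I(a_x) := {y ∈ a_x : dim (a_x)_y > 2} equals (k·e) × {0}. In particular codim_{a_x} I(a_x) = 3. -/

import Mathlib

noncomputable section

/-- Componentwise Lie ring structure on a product of two Lie rings. -/
instance Prod.lieRing (L M : Type*) [LieRing L] [LieRing M] : LieRing (L × M) where
  bracket x y := (⁅x.1, y.1⁆, ⁅x.2, y.2⁆)
  add_lie x y z := Prod.ext (add_lie x.1 y.1 z.1) (add_lie x.2 y.2 z.2)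
  lie_add x y z := Prod.ext (lie_add x.1 y.1 z.1) (lie_add x.2 y.2 z.2)
  lie_self x := Prod.ext (lie_self x.1) (lie_self x.2)
  leibniz_lie x y z := Prod.ext (leibniz_lie x.1 y.1 z.1) (leibniz_lie x.2 y.2 z.2)

/-- Componentwise Lie algebra structure on a product of two Lie algebras. -/
instance Prod.lieAlgebra (k L M : Type*) [CommRing k] [LieRing L] [LieRing M]
    [LieAlgebra k L] [LieAlgebra k M] : LieAlgebra k (L × M) where
  lie_smul c x y := Prod.ext (lie_smul c x.1 y.1) (lie_smul c x.2 y.2)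

open LieAlgebra.SpecialLinear Module

variable (k : Type*) [Field k] [IsAlgClosed k] [CharZero k]

/-- The nonzero nilpotent element `e = E₁₂` of `sl₂`. -/
def Esl2 : ↥(sl (Fin 2) k) := single 0 1 (by decide) (1 : k)

open Matrix

-- product bracket is componentwise
theorem prod_bracket {L M : Type*} [LieRing L] [LieRing M] (x y : L × M) :
    ⁅x, y⁆ = (⁅x.1, y.1⁆, ⁅x.2, y.2⁆) := rfl

theorem mem_sl_iff (A : Matrix (Fin 2) (Fin 2) k) : A ∈ sl (Fin 2) k ↔ A 1 1 = - (A 0 0) := by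
  change A ∈ LinearMap.ker (traceLinearMap (Fin 2) k k) ↔ _
  rw [LinearMap.mem_ker, traceLinearMap_apply, trace_fin_two]
  constructor <;> intro h <;> linear_combination h

theorem entry11 (A : sl (Fin 2) k) : A.val 1 1 = - A.val 0 0 := (mem_sl_iff k _).1 A.prop

theorem sl2_ext (A B : sl (Fin 2) k) (h1 : A.val 0 0 = B.val 0 0)
    (h2 : A.val 0 1 = B.val 0 1) (h3 : A.val 1 0 = B.val 1 0) : A = B := by
  apply Subtype.ext; ext i j
  fin_cases i <;> fin_cases j <;> simp [entry11, h1, h2, h3]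

theorem sl2_bracket_eq_zero_iff (A B : sl (Fin 2) k) : ⁅A,B⁆ = 0 ↔
    (A.val 0 1 * B.val 1 0 = A.val 1 0 * B.val 0 1) ∧
    (A.val 0 0 * B.val 0 1 = A.val 0 1 * B.val 0 0) ∧
    (A.val 1 0 * B.val 0 0 = A.val 0 0 * B.val 1 0) := by
  rw [Subtype.ext_iff]
  change A.val * B.val - B.val * A.val = 0 ↔ _
  rw [sub_eq_zero]
  constructor
  · intro h
    have h01 := congrFun (congrFun h 0) 1
    have h10 := congrFun (congrFun h 1) 0
    have h00 := congrFun (congrFun h 0) 0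
    simp [mul_apply, Fin.sum_univ_two, entry11] at h01 h10 h00
    exact ⟨by linear_combination h00, by linear_combination h01/2, by linear_combination h10/2⟩
  · rintro ⟨h1, h2, h3⟩
    ext i j
    fin_cases i <;> fin_cases j <;>
      simp [mul_apply, Fin.sum_univ_two, entry11] <;>
      first
        | linear_combination h1 | linear_combination -h1
        | linear_combination 2*h2 | linear_combination 2*h3

theorem Esl2_entries : (Esl2 k).val 0 0 = 0 ∧ (Esl2 k).val 0 1 = 1 ∧ (Esl2 k).val 1 0 = 0 := by
  refine ⟨?_, ?_, ?_⟩ <;> simp [Esl2, val_single, Matrix.single_apply]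

theorem Esl2_ne_zero : Esl2 k ≠ 0 := by
  intro h
  have := congrFun (congrFun (congrArg Subtype.val h) 0) 1
  rw [(Esl2_entries k).2.1] at this
  simp at this

theorem smul_val (c : k) (A : sl (Fin 2) k) (i j : Fin 2) :
    (c • A).val i j = c * A.val i j := rfl

theorem mem_span_Esl2_iff (B : sl (Fin 2) k) :
    B ∈ Submodule.span k {Esl2 k} ↔ B.val 0 0 = 0 ∧ B.val 1 0 = 0 := by
  rw [Submodule.mem_span_singleton]
  obtain ⟨e00, e01, e10⟩ := Esl2_entries k
  constructor
  · rintro ⟨c, rfl⟩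
    rw [smul_val, smul_val, e00, e10]; simp
  · rintro ⟨h1, h2⟩
    exact ⟨B.val 0 1, sl2_ext k _ _ (by rw [smul_val, e00, h1]; ring)
      (by rw [smul_val, e01]; ring) (by rw [smul_val, e10, h2]; ring)⟩

theorem ker_ad_Esl2 :
    LinearMap.ker (LieAlgebra.ad k ↥(sl (Fin 2) k) (Esl2 k)) = Submodule.span k {Esl2 k} := by
  ext B
  rw [LinearMap.mem_ker, LieAlgebra.ad_apply, sl2_bracket_eq_zero_iff, mem_span_Esl2_iff]
  obtain ⟨e00, e01, e10⟩ := Esl2_entries k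
  rw [e00, e01, e10]
  constructor
  · rintro ⟨a, b, c⟩
    exact ⟨by linear_combination -b, by linear_combination a⟩
  · rintro ⟨h1, h2⟩
    exact ⟨by linear_combination h2, by linear_combination -h1, by ring⟩

theorem ker_ad_ne_zero (A : sl (Fin 2) k) (hA : A ≠ 0) :
    LinearMap.ker (LieAlgebra.ad k ↥(sl (Fin 2) k) A) = Submodule.span k {A} := by
  have hent : ¬ (A.val 0 0 = 0 ∧ A.val 0 1 = 0 ∧ A.val 1 0 = 0) := by
    rintro ⟨h1, h2, h3⟩
    exact hA (sl2_ext k A 0 (by simpa using h1) (by simpa using h2) (by simpa using h3))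
  ext B
  rw [LinearMap.mem_ker, LieAlgebra.ad_apply, sl2_bracket_eq_zero_iff,
    Submodule.mem_span_singleton]
  constructor
  · rintro ⟨h1, h2, h3⟩
    by_cases ha : A.val 0 0 ≠ 0
    · refine ⟨B.val 0 0 / A.val 0 0, sl2_ext k _ _ ?_ ?_ ?_⟩ <;>
        rw [smul_val] <;> field_simp
      · linear_combination -h2
      · linear_combination h3
    push_neg at ha
    by_cases hb : A.val 0 1 ≠ 0
    · have hbp : A.val 0 1 * B.val 0 0 = 0 := by linear_combination -h2 + B.val 0 1 * ha
      have hp := (mul_eq_zero.1 hbp).resolve_left hb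
      refine ⟨B.val 0 1 / A.val 0 1, sl2_ext k _ _ ?_ ?_ ?_⟩ <;> rw [smul_val]
      · rw [ha, hp]; ring
      · field_simp
      · field_simp; linear_combination -h1
    push_neg at hb
    have hc : A.val 1 0 ≠ 0 := fun h => hent ⟨ha, hb, h⟩
    have hcq : A.val 1 0 * B.val 0 1 = 0 := by linear_combination -h1 + B.val 1 0 * hb
    have hq := (mul_eq_zero.1 hcq).resolve_left hc
    have hcp : A.val 1 0 * B.val 0 0 = 0 := by linear_combination h3 + B.val 1 0 * ha
    have hp := (mul_eq_zero.1 hcp).resolve_left hc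
    refine ⟨B.val 1 0 / A.val 1 0, sl2_ext k _ _ ?_ ?_ ?_⟩ <;> rw [smul_val]
    · rw [ha, hp]; ring
    · rw [hb, hq]; ring
    · field_simp
  · rintro ⟨d, rfl⟩
    refine ⟨?_, ?_, ?_⟩ <;> simp only [smul_val] <;> ring

instance sl2_finite : Module.Finite k ↥(sl (Fin 2) k) :=
  inferInstanceAs (Module.Finite k ↥(LinearMap.ker (traceLinearMap (Fin 2) k k)))

theorem finrank_sl2 : finrank k ↥(sl (Fin 2) k) = 3 := by
  have h := LinearMap.finrank_range_add_finrank_ker (traceLinearMap (Fin 2) k k)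
  have hsurj : LinearMap.range (traceLinearMap (Fin 2) k k) = ⊤ := by
    rw [LinearMap.range_eq_top]
    intro c
    exact ⟨!![c, 0; 0, 0], by simp [traceLinearMap_apply, trace_fin_two]⟩
  rw [hsurj, finrank_top, Module.finrank_self] at h
  have hm : finrank k (Matrix (Fin 2) (Fin 2) k) = 4 := by
    rw [Module.finrank_matrix]; simp
  rw [hm] at h
  show finrank k ↥(LinearMap.ker (traceLinearMap (Fin 2) k k)) = 3
  omega

def Submodule.prodLEquiv {R M N : Type*} [Ring R] [AddCommGroup M] [AddCommGroup N]
    [Module R M] [Module R N] (p : Submodule R M) (q : Submodule R N) :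
    ↥(p.prod q) ≃ₗ[R] ↥p × ↥q where
  toFun z := (⟨z.val.1, z.prop.1⟩, ⟨z.val.2, z.prop.2⟩)
  invFun z := ⟨(z.1.val, z.2.val), z.1.prop, z.2.prop⟩
  map_add' _ _ := rfl
  map_smul' _ _ := rfl
  left_inv _ := rfl
  right_inv _ := rfl

theorem ker_ad_prod {L M : Type*} [LieRing L] [LieRing M] [LieAlgebra k L] [LieAlgebra k M]
    (x : L × M) :
    LinearMap.ker (LieAlgebra.ad k (L × M) x) =
      (LinearMap.ker (LieAlgebra.ad k L x.1)).prod (LinearMap.ker (LieAlgebra.ad k M x.2)) := by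
  ext z
  simp only [LinearMap.mem_ker, LieAlgebra.ad_apply, Submodule.mem_prod, prod_bracket,
    Prod.mk_eq_zero]

theorem finrank_prod_span_q (q : Submodule k ↥(sl (Fin 2) k)) :
    finrank k ↥((Submodule.span k {Esl2 k}).prod q) = 1 + finrank k ↥q := by
  rw [(Submodule.prodLEquiv _ _).finrank_eq, Module.finrank_prod,
    finrank_span_singleton (Esl2_ne_zero k)]

/-- In `a = sl₂ (k) ⊕ sl₂ (k)`, let `x = (e, 0)` with `e = E₁₂`.  Then
`a_x = (k • e) ⊕ sl₂` and `I(a_x) = {y ∈ a_x | dim (a_x)_y > 2}` equals `(k • e) × {0}`.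
In particular `codim_{a_x} I(a_x) = 3`. -/
theorem sl2_sl2_centralizer_irregular_locus :
    LinearMap.ker
        (LieAlgebra.ad k (↥(sl (Fin 2) k) × ↥(sl (Fin 2) k)) (Esl2 k, 0))
        = (Submodule.span k {Esl2 k}).prod (⊤ : Submodule k ↥(sl (Fin 2) k)) ∧
      Module.finrank k
        ↥(LinearMap.ker
            (LieAlgebra.ad k (↥(sl (Fin 2) k) × ↥(sl (Fin 2) k)) (Esl2 k, 0))) = 4 ∧
      {y : ↥(sl (Fin 2) k) × ↥(sl (Fin 2) k) |
          y ∈ LinearMap.ker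
              (LieAlgebra.ad k (↥(sl (Fin 2) k) × ↥(sl (Fin 2) k)) (Esl2 k, 0)) ∧
          2 < Module.finrank k
              ↥(LinearMap.ker
                  (LieAlgebra.ad k (↥(sl (Fin 2) k) × ↥(sl (Fin 2) k)) (Esl2 k, 0))
                ⊓ LinearMap.ker
                  (LieAlgebra.ad k (↥(sl (Fin 2) k) × ↥(sl (Fin 2) k)) y))}
        = (↑(Submodule.span k {Esl2 k}) : Set ↥(sl (Fin 2) k)) ×ˢ
            ({0} : Set ↥(sl (Fin 2) k)) := by
  have hker : LinearMap.ker
      (LieAlgebra.ad k (↥(sl (Fin 2) k) × ↥(sl (Fin 2) k)) (Esl2 k, 0))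
      = (Submodule.span k {Esl2 k}).prod (⊤ : Submodule k ↥(sl (Fin 2) k)) := by
    rw [ker_ad_prod]
    congr 1
    · exact ker_ad_Esl2 k
    · ext z
      simp [LieAlgebra.ad_apply]
  have hint : ∀ y1 ∈ Submodule.span k {Esl2 k}, ∀ y2 : ↥(sl (Fin 2) k),
      LinearMap.ker (LieAlgebra.ad k (↥(sl (Fin 2) k) × ↥(sl (Fin 2) k)) (Esl2 k, 0))
        ⊓ LinearMap.ker (LieAlgebra.ad k (↥(sl (Fin 2) k) × ↥(sl (Fin 2) k)) (y1, y2))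
      = (Submodule.span k {Esl2 k}).prod
          (LinearMap.ker (LieAlgebra.ad k ↥(sl (Fin 2) k) y2)) := by
    intro y1 hy1 y2
    rw [hker, ker_ad_prod, Submodule.prod_inf_prod, top_inf_eq]
    congr 1
    rw [inf_eq_left, Submodule.span_le]
    obtain ⟨c, rfl⟩ := Submodule.mem_span_singleton.1 hy1
    rintro z rfl
    rw [SetLike.mem_coe, LinearMap.mem_ker, LieAlgebra.ad_apply, smul_lie, lie_self, smul_zero]
  refine ⟨hker, ?_, ?_⟩
  · rw [hker, finrank_prod_span_q, finrank_top, finrank_sl2]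
  · ext y
    obtain ⟨y1, y2⟩ := y
    simp only [Set.mem_setOf_eq, Set.mem_prod, Set.mem_singleton_iff, SetLike.mem_coe]
    constructor
    · rintro ⟨hy, hdim⟩
      rw [hker, Submodule.mem_prod] at hy
      obtain ⟨hy1, -⟩ := hy
      refine ⟨hy1, ?_⟩
      by_contra hy2
      rw [hint y1 hy1 y2, finrank_prod_span_q, ker_ad_ne_zero k y2 hy2,
        finrank_span_singleton hy2] at hdim
      omega
    · rintro ⟨hy1, rfl⟩
      constructor
      · rw [hker, Submodule.mem_prod]
        exact ⟨hy1, trivial⟩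
      · rw [hint y1 hy1 0, finrank_prod_span_q]
        have : LinearMap.ker (LieAlgebra.ad k ↥(sl (Fin 2) k) 0) = ⊤ := by
          ext z; simp [LieAlgebra.ad_apply]
        rw [this, finrank_top, finrank_sl2]
        omega
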